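/- Let 1 ≤ x ≤ ℓ ≤ 2/√3. Then −(ℓ²/2)·arccos(x/ℓ) + (x/2)·√(ℓ² − x²) + (3/2 − x)·(ℓ²·arccos(1/ℓ) − √(ℓ² − 1)) ≥ 0. Moreover, for every 1 < ℓ ≤ 2/√3, the quantity ℓ²·arccos(1/ℓ) − √(ℓ² − 1) is positive and equals one sixth of the area of ℓB² ∖ H, where H is the regular hexagon of inradius 1 centered at the origin in E². -/

import Mathlib

open MeasureTheory Metric

/-- The regular hexagon centered at the origin circumscribed about the unit disk `B²`
(inradius `1`, circumradius `2/√3`): the convex hull of its six vertices. -/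
noncomputable def regularHexagon : Set (EuclideanSpace ℝ (Fin 2)) :=
  convexHull ℝ (Set.range fun k : Fin 6 =>
    (WithLp.equiv 2 (Fin 2 → ℝ)).symm
      ![2 / Real.sqrt 3 * Real.cos ((k : ℝ) * (Real.pi / 3)),
        2 / Real.sqrt 3 * Real.sin ((k : ℝ) * (Real.pi / 3))])

section Aux
open Real Complex ComplexConjugate intervalIntegral


lemma sqrt3_pos : (0:ℝ) < Real.sqrt 3 := Real.sqrt_pos.2 (by norm_num)
lemma sqrt3_sq : Real.sqrt 3 ^ 2 = 3 := Real.sq_sqrt (by norm_num)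

lemma r_sq : (2 / Real.sqrt 3 : ℝ)^2 = 4/3 := by
  rw [div_pow, sqrt3_sq]; norm_num

lemma r_lt_threehalf : (2 / Real.sqrt 3 : ℝ) < 3/2 := by
  nlinarith [sqrt3_pos, sqrt3_sq, r_sq, div_nonneg (by norm_num : (0:ℝ) ≤ 2) sqrt3_pos.le]

lemma sqrt_sub_one (l : ℝ) (hl : 0 < l) :
    Real.sqrt (l^2 - 1) = l * Real.sin (Real.arccos (1/l)) := by
  rw [Real.sin_arccos]
  rw [show l^2 - 1 = l^2 * (1 - (1/l)^2) by field_simp,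
    Real.sqrt_mul (sq_nonneg l), Real.sqrt_sq hl.le]

lemma hexC_nonneg (l : ℝ) (hl : 1 ≤ l) :
    0 ≤ l^2 * Real.arccos (1/l) - Real.sqrt (l^2 - 1) := by
  have h0 : 0 < l := by linarith
  have h1 : Real.sin (Real.arccos (1/l)) ≤ Real.arccos (1/l) :=
    Real.sin_le (Real.arccos_nonneg _)
  have h2 := Real.arccos_nonneg (1/l)
  rw [sqrt_sub_one l h0]
  nlinarith [mul_le_mul_of_nonneg_left h1 h0.le,
    mul_nonneg (mul_nonneg h0.le h2) (sub_nonneg.2 hl)]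

lemma hexC_pos (l : ℝ) (hl : 1 < l) :
    0 < l^2 * Real.arccos (1/l) - Real.sqrt (l^2 - 1) := by
  have h0 : 0 < l := by linarith
  have hlt : 1/l < 1 := by rw [div_lt_one h0]; exact hl
  have hpos : 0 < Real.arccos (1/l) := Real.arccos_pos.2 hlt
  have h1 : Real.sin (Real.arccos (1/l)) < Real.arccos (1/l) := Real.sin_lt hpos
  rw [sqrt_sub_one l h0]
  have hll : (1:ℝ) ≤ l := hl.le
  nlinarith [mul_lt_mul_of_pos_left h1 h0,
    mul_nonneg (mul_nonneg h0.le hpos.le) (sub_nonneg.2 hll)]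

lemma hasDerivAt_sqrt_sub (l x : ℝ) (hx : x^2 < l^2) :
    HasDerivAt (fun t : ℝ => Real.sqrt (l^2 - t^2)) (-x / Real.sqrt (l^2 - x^2)) x := by
  have hpos : 0 < l^2 - x^2 := by linarith
  have h1 : HasDerivAt (fun t : ℝ => l^2 - t^2) (-(2*x)) x := by
    simpa using (hasDerivAt_pow 2 x).const_sub (l^2)
  have h2 : HasDerivAt (fun t : ℝ => Real.sqrt (l^2 - t^2)) _ x := (Real.hasDerivAt_sqrt hpos.ne').comp x h1
  convert h2 using 1
  have hs : 0 < Real.sqrt (l^2 - x^2) := Real.sqrt_pos.2 hpos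
  field_simp

lemma sqrt_one_sub_div (l x : ℝ) (h0 : 0 < l) :
    Real.sqrt (1 - (x/l)^2) = Real.sqrt (l^2 - x^2) / l := by
  rw [show 1 - (x/l)^2 = (l^2 - x^2)/l^2 by field_simp,
    Real.sqrt_div' _ (sq_nonneg l), Real.sqrt_sq h0.le]



lemma integral_two_sqrt (l : ℝ) (hl : 1 < l) :
    ∫ x in (1:ℝ)..l, 2 * Real.sqrt (l^2 - x^2)
      = l^2 * Real.arccos (1/l) - Real.sqrt (l^2 - 1) := by
  have h0 : (0:ℝ) < l := by linarith
  set F : ℝ → ℝ := fun x => x * Real.sqrt (l^2 - x^2) + l^2 * Real.arcsin (x/l) with hF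
  have key : ∫ x in (1:ℝ)..l, 2 * Real.sqrt (l^2-x^2) = F l - F 1 := by
    apply integral_eq_sub_of_hasDeriv_right_of_le hl.le
    · apply ContinuousOn.add
      · exact (continuousOn_id.mul ((Real.continuous_sqrt.comp (by continuity)).continuousOn))
      · exact (continuousOn_const.mul ((Real.continuous_arcsin.comp (by continuity)).continuousOn))
    · intro x hx
      have hx2 : x^2 < l^2 := by nlinarith [hx.1, hx.2]
      have hs : 0 < Real.sqrt (l^2 - x^2) := Real.sqrt_pos.2 (by nlinarith)
      have h1 : HasDerivAt (fun t : ℝ => t * Real.sqrt (l^2 - t^2))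
          (1 * Real.sqrt (l^2 - x^2) + x * (-x / Real.sqrt (l^2 - x^2))) x :=
        (hasDerivAt_id x).mul (hasDerivAt_sqrt_sub l x hx2)
      have hne1 : x / l ≠ -1 := by
        have : 0 < x/l := div_pos (by linarith [hx.1]) h0
        linarith
      have hne2 : x / l ≠ 1 := by
        have : x/l < 1 := (div_lt_one h0).2 hx.2
        linarith
      have h2 : HasDerivAt (fun t : ℝ => Real.arcsin (t/l))
          (1 / Real.sqrt (1 - (x/l)^2) * (1/l)) x :=
        by have := (Real.hasDerivAt_arcsin hne1 hne2).comp x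
                  ((hasDerivAt_id' x).div_const l); exact this
      have h3 := h1.add ((h2.const_mul (l^2)))
      have : (1 * Real.sqrt (l^2 - x^2) + x * (-x / Real.sqrt (l^2 - x^2)))
          + l^2 * (1 / Real.sqrt (1 - (x/l)^2) * (1/l)) = 2 * Real.sqrt (l^2 - x^2) := by
        rw [sqrt_one_sub_div l x h0]
        have hsq := Real.sq_sqrt (by nlinarith : (0:ℝ) ≤ l^2 - x^2)
        field_simp
        linear_combination (-1) * hsq
      rw [this] at h3
      exact h3.hasDerivWithinAt
    · exact ((continuous_const.mul (Real.continuous_sqrt.comp (by continuity))).intervalIntegrable 1 l)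
  rw [key, hF]
  have e1 : Real.sqrt (l^2 - l^2) = 0 := by simp
  have e2 : l / l = 1 := div_self h0.ne'
  have e3 : Real.arccos (1/l) = π/2 - Real.arcsin (1/l) := Real.arccos_eq_pi_div_two_sub_arcsin (1/l)
  simp only [e1, e2, Real.arcsin_one]
  rw [e3]
  ring



lemma measurable_segProd (l : ℝ) :
    MeasurableSet {p : ℝ × ℝ | p.1^2 + p.2^2 ≤ l^2 ∧ 1 < p.1} := by
  apply MeasurableSet.inter
  · exact measurableSet_le ((measurable_fst.pow_const 2).add (measurable_snd.pow_const 2))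
      measurable_const
  · exact measurableSet_lt measurable_const measurable_fst

lemma volume_segProd (l : ℝ) (hl : 1 < l) :
    volume {p : ℝ × ℝ | p.1^2 + p.2^2 ≤ l^2 ∧ 1 < p.1}
      = ENNReal.ofReal (l^2 * Real.arccos (1/l) - Real.sqrt (l^2 - 1)) := by
  have hS := measurable_segProd l
  rw [Measure.volume_eq_prod, Measure.prod_apply hS]
  have slice : ∀ x : ℝ, volume (Prod.mk x ⁻¹' {p : ℝ × ℝ | p.1^2 + p.2^2 ≤ l^2 ∧ 1 < p.1})
      = Set.indicator (Set.Ioc 1 l) (fun x => ENNReal.ofReal (2 * Real.sqrt (l^2 - x^2))) x := by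
    intro x
    rcases le_or_gt x 1 with h | h
    · rw [Set.indicator_of_notMem (by simp only [Set.mem_Ioc, not_and, not_le]; intro h'; linarith)]
      have : Prod.mk x ⁻¹' {p : ℝ × ℝ | p.1^2 + p.2^2 ≤ l^2 ∧ 1 < p.1} = (∅ : Set ℝ) := by
        ext y; simp only [Set.mem_preimage, Set.mem_setOf_eq, Set.mem_empty_iff_false, iff_false]
        rintro ⟨-, h2⟩; linarith
      rw [this, measure_empty]
    rcases le_or_gt x l with h2 | h2
    · rw [Set.indicator_of_mem (Set.mem_Ioc.2 ⟨h, h2⟩)]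
      have hD : (0:ℝ) ≤ l^2 - x^2 := by nlinarith
      have hsq := Real.sq_sqrt hD
      have hsn := Real.sqrt_nonneg (l^2 - x^2)
      have : Prod.mk x ⁻¹' {p : ℝ × ℝ | p.1^2 + p.2^2 ≤ l^2 ∧ 1 < p.1}
          = Set.Icc (-Real.sqrt (l^2 - x^2)) (Real.sqrt (l^2 - x^2)) := by
        ext y
        simp only [Set.mem_preimage, Set.mem_setOf_eq, Set.mem_Icc, h, and_true]
        constructor
        · intro hy
          have hy2 : y^2 ≤ l^2 - x^2 := by linarith
          have : |y| ≤ Real.sqrt (l^2 - x^2) := by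
            rw [← Real.sqrt_sq_eq_abs]; exact Real.sqrt_le_sqrt hy2
          exact abs_le.1 this
        · rintro ⟨h1, h2⟩; nlinarith
      rw [this, Real.volume_Icc]
      congr 1; ring
    · rw [Set.indicator_of_notMem (by simp [h2.not_ge])]
      have : Prod.mk x ⁻¹' {p : ℝ × ℝ | p.1^2 + p.2^2 ≤ l^2 ∧ 1 < p.1} = (∅ : Set ℝ) := by
        ext y; simp only [Set.mem_preimage, Set.mem_setOf_eq, Set.mem_empty_iff_false, iff_false]
        rintro ⟨h1, -⟩; nlinarith
      rw [this, measure_empty]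
  simp only [slice]
  rw [lintegral_indicator measurableSet_Ioc]
  have hcont : Continuous (fun x : ℝ => 2 * Real.sqrt (l^2 - x^2)) := by
    apply continuous_const.mul; exact Real.continuous_sqrt.comp (by continuity)
  rw [← MeasureTheory.ofReal_integral_eq_lintegral_ofReal
      (hcont.integrableOn_Ioc)
      (Filter.Eventually.of_forall (fun x => by positivity))]
  rw [← intervalIntegral.integral_of_le hl.le, integral_two_sqrt l hl]


noncomputable def xi (θ : ℝ) : ℂ := Complex.exp (θ * Complex.I)

lemma xi_mul (a b : ℝ) : xi a * xi b = xi (a+b) := by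
  simp [xi, ← Complex.exp_add]; ring_nf

lemma xi_conj (a : ℝ) : (starRingEnd ℂ) (xi a) = xi (-a) := by
  rw [xi, ← Complex.exp_conj]
  congr 1
  simp

lemma xi_re (a : ℝ) : (xi a).re = Real.cos a := by
  rw [xi, Complex.exp_mul_I]
  simp [Complex.cos_ofReal_re]

lemma xi_im (a : ℝ) : (xi a).im = Real.sin a := by
  rw [xi, Complex.exp_mul_I]
  simp [Complex.sin_ofReal_re]

lemma xi_abs (a : ℝ) : ‖xi a‖ = 1 := Complex.norm_exp_ofReal_mul_I a

lemma xi_period (a : ℝ) (n : ℤ) : xi (a + n * (2*Real.pi)) = xi a := by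
  rw [← xi_mul]
  have : xi ((n : ℝ) * (2*Real.pi)) = 1 := by
    rw [xi]
    rw [show (((n:ℝ) * (2*Real.pi) : ℝ) : ℂ) * Complex.I = (n:ℂ) * (2 * Real.pi * Complex.I) by
      push_cast; ring]
    exact Complex.exp_int_mul_two_pi_mul_I n
  rw [this, mul_one]

noncomputable def Vc (m : ℤ) : ℂ := ((2 / Real.sqrt 3 : ℝ) : ℂ) * xi (m * (Real.pi/3))

noncomputable def Nc (m : ℤ) : ℂ := xi (Real.pi/6 + m * (Real.pi/3))

lemma vertex_dot (j k : ℤ) : (Vc j * (starRingEnd ℂ) (Nc k)).re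
    = (2 / Real.sqrt 3) * Real.cos ((j - k : ℤ) * (Real.pi/3) - Real.pi/6) := by
  rw [Vc, Nc, xi_conj, mul_assoc, xi_mul]
  rw [show ((j:ℝ) * (Real.pi/3) + -(Real.pi/6 + (k:ℝ) * (Real.pi/3)))
      = ((j - k : ℤ) : ℝ) * (Real.pi/3) - Real.pi/6 by push_cast; ring]
  simp [xi_re]

lemma cos_pi_sub' : Real.cos (5 * Real.pi / 6) = -(Real.sqrt 3 / 2) := by
  rw [show (5 * Real.pi / 6 : ℝ) = Real.pi - Real.pi/6 by ring, Real.cos_pi_sub,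
    Real.cos_pi_div_six]

lemma cos_76 : Real.cos (7 * Real.pi / 6) = -(Real.sqrt 3 / 2) := by
  rw [show (7 * Real.pi / 6 : ℝ) = Real.pi + Real.pi/6 by ring, Real.cos_add]
  simp [Real.cos_pi_div_six]

lemma cos_32 : Real.cos (3 * Real.pi / 2) = 0 := by
  rw [show (3 * Real.pi / 2 : ℝ) = Real.pi + Real.pi/2 by ring, Real.cos_add]
  simp

lemma cos_red (m : ℤ) : Real.cos (m * (Real.pi/3) - Real.pi/6)
    = Real.cos ((m % 6 : ℤ) * (Real.pi/3) - Real.pi/6) := by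
  have hmod : ((m % 6 : ℤ) : ℝ) + 6 * ((m / 6 : ℤ) : ℝ) = (m : ℝ) := by
    exact_mod_cast Int.emod_add_mul_ediv m 6
  rw [show ((m:ℝ) * (Real.pi/3) - Real.pi/6)
      = ((((m % 6 : ℤ) : ℝ)) * (Real.pi/3) - Real.pi/6) + ((m / 6 : ℤ) : ℝ) * (2 * Real.pi) by
    linear_combination (Real.pi/3) * hmod.symm]
  exact_mod_cast Real.cos_add_int_mul_two_pi _ _

lemma cos_bound (m : ℤ) : Real.cos (m * (Real.pi/3) - Real.pi/6) ≤ Real.sqrt 3 / 2 := by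
  rw [cos_red]
  have h0 : 0 ≤ m % 6 := Int.emod_nonneg m (by norm_num)
  have h5 : m % 6 < 6 := Int.emod_lt_of_pos m (by norm_num)
  have hs3 : (0:ℝ) ≤ Real.sqrt 3 := Real.sqrt_nonneg 3
  interval_cases h : m % 6
  · rw [show (((0:ℤ):ℝ)) * (Real.pi/3) - Real.pi/6 = -(Real.pi/6) by push_cast; ring,
      Real.cos_neg, Real.cos_pi_div_six]
  · rw [show (((1:ℤ):ℝ)) * (Real.pi/3) - Real.pi/6 = Real.pi/6 by push_cast; ring,
      Real.cos_pi_div_six]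
  · rw [show (((2:ℤ):ℝ)) * (Real.pi/3) - Real.pi/6 = Real.pi/2 by push_cast; ring,
      Real.cos_pi_div_two]
    positivity
  · rw [show (((3:ℤ):ℝ)) * (Real.pi/3) - Real.pi/6 = 5 * Real.pi / 6 by push_cast; ring,
      cos_pi_sub']
    nlinarith
  · rw [show (((4:ℤ):ℝ)) * (Real.pi/3) - Real.pi/6 = 7 * Real.pi / 6 by push_cast; ring,
      cos_76]
    nlinarith
  · rw [show (((5:ℤ):ℝ)) * (Real.pi/3) - Real.pi/6 = 3 * Real.pi / 2 by push_cast; ring,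
      cos_32]
    positivity


lemma r_mul_cos6 : (2 / Real.sqrt 3) * (Real.sqrt 3 / 2) = 1 := by
  field_simp

lemma vertex_halfplane (j k : ℤ) : (Vc j * conj (Nc k)).re ≤ 1 := by
  rw [vertex_dot]
  calc (2 / Real.sqrt 3) * Real.cos ((j - k : ℤ) * (Real.pi/3) - Real.pi/6)
      ≤ (2 / Real.sqrt 3) * (Real.sqrt 3 / 2) :=
        mul_le_mul_of_nonneg_left (cos_bound _) (by positivity)
    _ = 1 := r_mul_cos6

lemma dot_self (m : ℤ) : (Vc m * conj (Nc m)).re = 1 := by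
  rw [vertex_dot, sub_self]
  rw [show ((0:ℤ):ℝ) * (Real.pi/3) - Real.pi/6 = -(Real.pi/6) by push_cast; ring,
    Real.cos_neg, Real.cos_pi_div_six, r_mul_cos6]

lemma dot_next (m : ℤ) : (Vc (m+1) * conj (Nc m)).re = 1 := by
  rw [vertex_dot, show m + 1 - m = (1:ℤ) by ring]
  rw [show ((1:ℤ):ℝ) * (Real.pi/3) - Real.pi/6 = Real.pi/6 by push_cast; ring,
    Real.cos_pi_div_six, r_mul_cos6]

lemma Vc_period' (m q : ℤ) : Vc (m + 6*q) = Vc m := by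
  rw [Vc, Vc, show ((m + 6*q : ℤ):ℝ) * (Real.pi/3) = (m:ℝ) * (Real.pi/3) + q * (2*Real.pi) by
    push_cast; ring, xi_period]

lemma Vc_neg3 (m : ℤ) : Vc (m + 3) = - Vc m := by
  rw [Vc, Vc, show ((m + 3 : ℤ):ℝ) * (Real.pi/3) = (m:ℝ) * (Real.pi/3) + Real.pi by
    push_cast; ring, ← xi_mul]
  have : xi Real.pi = -1 := by rw [xi]; exact_mod_cast Complex.exp_pi_mul_I
  rw [this]; ring

lemma cramer (u w z : ℂ) : ((conj u * w).im) • z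
    = ((conj z * w).im) • u + ((conj u * z).im) • w := by
  apply Complex.ext <;>
    simp only [Complex.add_re, Complex.add_im, Complex.real_smul, Complex.mul_re, Complex.mul_im,
      Complex.ofReal_re, Complex.ofReal_im, Complex.conj_re, Complex.conj_im] <;> ring

lemma im_swap (u w : ℂ) : (conj u * w).im = -((conj w * u).im) := by
  simp only [Complex.mul_im, Complex.conj_re, Complex.conj_im]; ring

lemma dd (m : ℤ) : (conj (Vc m) * Vc (m+1)).im
    = (2 / Real.sqrt 3)^2 * Real.sin (Real.pi/3) := by
  rw [Vc, Vc, map_mul, xi_conj, Complex.conj_ofReal]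
  rw [show ((2 / Real.sqrt 3 : ℝ):ℂ) * xi (-((m:ℝ) * (Real.pi/3)))
        * (((2 / Real.sqrt 3 : ℝ):ℂ) * xi (((m+1:ℤ):ℝ) * (Real.pi/3)))
      = (((2 / Real.sqrt 3 : ℝ)^2 : ℝ):ℂ) * (xi (-((m:ℝ) * (Real.pi/3)))
        * xi (((m+1:ℤ):ℝ) * (Real.pi/3))) by push_cast; ring]
  rw [xi_mul, show (-((m:ℝ) * (Real.pi/3)) + ((m+1:ℤ):ℝ) * (Real.pi/3)) = Real.pi/3 by
    push_cast; ring]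
  have him : ∀ (s : ℝ) (w : ℂ), ((s:ℂ) * w).im = s * w.im := fun s w => by
    simp [Complex.mul_im]
  rw [him, xi_im]

noncomputable def HexC : Set ℂ := convexHull ℝ (Set.range fun k : Fin 6 => Vc (k : ℤ))

lemma Vc_mem (m : ℤ) : Vc m ∈ HexC := by
  have hmod : m % 6 + 6 * (m / 6) = m := Int.emod_add_mul_ediv m 6
  have h2 : Vc (m % 6) = Vc m := by
    have := Vc_period' (m % 6) (m / 6)
    rw [show m % 6 + 6 * (m / 6) = m by omega] at this
    exact this.symm
  rw [← h2]
  have h0 : 0 ≤ m % 6 := Int.emod_nonneg m (by norm_num)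
  have h5 : m % 6 < 6 := Int.emod_lt_of_pos m (by norm_num)
  interval_cases h : m % 6
  · refine subset_convexHull ℝ _ ⟨(0 : Fin 6), ?_⟩
    show Vc _ = _
    congr 1
  · refine subset_convexHull ℝ _ ⟨(1 : Fin 6), ?_⟩
    show Vc _ = _
    congr 1
  · refine subset_convexHull ℝ _ ⟨(2 : Fin 6), ?_⟩
    show Vc _ = _
    congr 1
  · refine subset_convexHull ℝ _ ⟨(3 : Fin 6), ?_⟩
    show Vc _ = _
    congr 1
  · refine subset_convexHull ℝ _ ⟨(4 : Fin 6), ?_⟩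
    show Vc _ = _
    congr 1
  · refine subset_convexHull ℝ _ ⟨(5 : Fin 6), ?_⟩
    show Vc _ = _
    congr 1

lemma zero_mem_HexC : (0:ℂ) ∈ HexC := by
  have h0 : Vc 0 ∈ HexC := Vc_mem 0
  have h3 : Vc 3 ∈ HexC := Vc_mem 3
  have := (convex_convexHull ℝ _) h0 h3 (by norm_num : (0:ℝ) ≤ 1/2)
    (by norm_num : (0:ℝ) ≤ 1/2) (by norm_num)
  have hneg : Vc 3 = - Vc 0 := by rw [show (3:ℤ) = 0 + 3 by ring, Vc_neg3]
  rw [hneg] at this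
  simpa [HexC] using this

lemma hexC_subset_halfplane (k : ℤ) : HexC ⊆ {z : ℂ | (z * conj (Nc k)).re ≤ 1} := by
  apply convexHull_min
  · rintro z ⟨j, rfl⟩
    exact vertex_halfplane _ _
  · exact convex_halfSpace_le
      ⟨fun a b => by simp [add_mul], fun c x => by
        simp [Complex.real_smul, smul_mul_assoc, Complex.mul_re]; ring⟩ 1


lemma mem_hexC (z : ℂ) (hz : ∀ k : ℤ, (z * conj (Nc k)).re ≤ 1) : z ∈ HexC := by
  set c : ℤ → ℝ := fun m => (conj (Vc m) * z).im with hc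
  have hflip : ∀ m : ℤ, c (m+3) = - c m := by
    intro m
    simp only [hc, Vc_neg3, map_neg, neg_mul, Complex.neg_im]
  have h6 : c 6 = c 0 := by
    simp only [hc]
    rw [show (6:ℤ) = 0 + 6*1 by ring, Vc_period']
  obtain ⟨m, _, _, hge, hle⟩ : ∃ m : ℤ, 0 ≤ m ∧ m ≤ 5 ∧ 0 ≤ c m ∧ c (m+1) ≤ 0 := by
    rcases le_or_gt 0 (c 0) with h | h
    · rcases le_or_gt (c 1) 0 with h1 | h1
      · exact ⟨0, by norm_num, by norm_num, h, h1⟩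
      · rcases le_or_gt (c 2) 0 with h2 | h2
        · exact ⟨1, by norm_num, by norm_num, h1.le, h2⟩
        · refine ⟨2, by norm_num, by norm_num, h2.le, ?_⟩
          have := hflip 0
          norm_num at this ⊢
          linarith
    · rcases le_or_gt (c 4) 0 with h4 | h4
      · refine ⟨3, by norm_num, by norm_num, ?_, h4⟩
        have := hflip 0
        norm_num at this ⊢
        linarith
      · rcases le_or_gt (c 5) 0 with h5 | h5
        · exact ⟨4, by norm_num, by norm_num, h4.le, h5⟩
        · refine ⟨5, by norm_num, by norm_num, h5.le, ?_⟩
          norm_num [h6]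
          linarith
  set D : ℝ := (2 / Real.sqrt 3 : ℝ)^2 * Real.sin (Real.pi/3) with hD
  have hDpos : 0 < D := by
    rw [hD, Real.sin_pi_div_three]
    positivity
  set a : ℝ := (conj z * Vc (m+1)).im / D with ha'
  set b : ℝ := c m / D with hb'
  have ha : 0 ≤ a := by
    apply div_nonneg _ hDpos.le
    rw [im_swap]
    simp only [hc] at hle
    linarith
  have hb : 0 ≤ b := div_nonneg hge hDpos.le
  have hzab : z = a • Vc m + b • Vc (m+1) := by
    have hcr := cramer (Vc m) (Vc (m+1)) z
    rw [dd m] at hcr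
    have : D⁻¹ • (D • z) = D⁻¹ • ((conj z * Vc (m+1)).im • Vc m + (conj (Vc m) * z).im • Vc (m+1)) := by
      rw [hcr]
    rw [smul_smul, inv_mul_cancel₀ hDpos.ne', one_smul] at this
    rw [this, smul_add, smul_smul, smul_smul, ha', hb', hc]
    ring_nf
  have hab1 : a + b ≤ 1 := by
    have h1 := hz m
    rw [hzab] at h1
    have expand : ((a • Vc m + b • Vc (m+1)) * conj (Nc m)).re
        = a * (Vc m * conj (Nc m)).re + b * (Vc (m+1) * conj (Nc m)).re := by
      simp [add_mul, Complex.add_re, Complex.real_smul, smul_mul_assoc, Complex.mul_re,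
        Complex.ofReal_re, Complex.ofReal_im]
      ring
    rw [expand, dot_self, dot_next] at h1
    linarith
  -- combine into convex hull membership
  have hC : Convex ℝ HexC := convex_convexHull ℝ _
  rcases eq_or_lt_of_le (add_nonneg ha hb) with ht0 | ht0
  · have haz : a = 0 := by linarith
    have hbz : b = 0 := by linarith
    rw [hzab, haz, hbz]
    simpa using zero_mem_HexC
  · set t : ℝ := a + b with htdef
    have hp : (a/t) • Vc m + (b/t) • Vc (m+1) ∈ HexC :=
      hC (Vc_mem m) (Vc_mem (m+1)) (div_nonneg ha ht0.le) (div_nonneg hb ht0.le)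
        (by field_simp; exact htdef.symm)
    have hfin := hC hp zero_mem_HexC ht0.le (by linarith : 0 ≤ 1 - t) (by ring)
    have : t • ((a/t) • Vc m + (b/t) • Vc (m+1)) + (1-t) • (0:ℂ) = z := by
      rw [smul_add, smul_smul, smul_smul, smul_zero, add_zero,
        mul_div_cancel₀ _ ht0.ne', mul_div_cancel₀ _ ht0.ne', ← hzab]
    rwa [this] at hfin


noncomputable def segC (l : ℝ) (n : ℂ) : Set ℂ :=
  {z | ‖z‖ ≤ l ∧ 1 < (z * conj n).re}

lemma segC_measurable (l : ℝ) (n : ℂ) : MeasurableSet (segC l n) := by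
  apply MeasurableSet.inter
  · exact (isClosed_le continuous_norm continuous_const).measurableSet
  · exact (isOpen_lt continuous_const
      (Complex.continuous_re.comp (continuous_mul_right _))).measurableSet

lemma xi_red (m : ℤ) : xi (m * (Real.pi/3)) = xi ((m % 6 : ℤ) * (Real.pi/3)) := by
  conv_lhs => rw [show m = m % 6 + 6 * (m / 6) by omega]
  rw [show (((m % 6 + 6 * (m / 6) : ℤ)):ℝ) * (Real.pi/3)
      = ((m % 6 : ℤ) : ℝ) * (Real.pi/3) + ((m / 6 : ℤ) : ℝ) * (2 * Real.pi) by push_cast; ring]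
  exact_mod_cast xi_period _ _

lemma cos23 : Real.cos (2 * (Real.pi/3)) = -(1/2) := by
  rw [show (2 * (Real.pi/3) : ℝ) = Real.pi - Real.pi/3 by ring, Real.cos_pi_sub,
    Real.cos_pi_div_three]
lemma sin23 : Real.sin (2 * (Real.pi/3)) = Real.sqrt 3 / 2 := by
  rw [show (2 * (Real.pi/3) : ℝ) = Real.pi - Real.pi/3 by ring, Real.sin_pi_sub,
    Real.sin_pi_div_three]
lemma cos33 : Real.cos (3 * (Real.pi/3)) = -1 := by
  rw [show (3 * (Real.pi/3) : ℝ) = Real.pi by ring, Real.cos_pi]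
lemma sin33 : Real.sin (3 * (Real.pi/3)) = 0 := by
  rw [show (3 * (Real.pi/3) : ℝ) = Real.pi by ring, Real.sin_pi]
lemma cos43 : Real.cos (4 * (Real.pi/3)) = -(1/2) := by
  rw [show (4 * (Real.pi/3) : ℝ) = Real.pi + Real.pi/3 by ring, Real.cos_add]
  simp [Real.cos_pi_div_three]
lemma sin43 : Real.sin (4 * (Real.pi/3)) = -(Real.sqrt 3 / 2) := by
  rw [show (4 * (Real.pi/3) : ℝ) = Real.pi + Real.pi/3 by ring, Real.sin_add]
  simp [Real.sin_pi_div_three]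
lemma cos53 : Real.cos (5 * (Real.pi/3)) = 1/2 := by
  rw [show (5 * (Real.pi/3) : ℝ) = Real.pi + 2*(Real.pi/3) by ring, Real.cos_add]
  simp [cos23]
lemma sin53 : Real.sin (5 * (Real.pi/3)) = -(Real.sqrt 3 / 2) := by
  rw [show (5 * (Real.pi/3) : ℝ) = Real.pi + 2*(Real.pi/3) by ring, Real.sin_add]
  simp [sin23]

lemma seg_disjoint (l : ℝ) (hl : l ≤ 2 / Real.sqrt 3) :
    Pairwise (Function.onFun Disjoint (fun k : Fin 6 => segC l (Nc (k:ℤ)))) := by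
  intro j k hjk
  rw [Function.onFun, Set.disjoint_left]
  rintro z ⟨hzl, hj⟩ ⟨-, hk⟩
  set w : ℂ := z * conj (Nc (j:ℤ)) with hw
  set m6 : ℤ := ((j:ℤ) - (k:ℤ)) % 6 with hm6
  have hrot1 : z * conj (Nc (k:ℤ)) = w * xi (m6 * (Real.pi/3)) := by
    rw [hm6, ← xi_red, hw, Nc, Nc, xi_conj, xi_conj, mul_assoc, xi_mul]
    congr 2
    push_cast
    ring
  have habs : ‖w‖ ≤ 2 / Real.sqrt 3 := by
    rw [hw, norm_mul, Nc, xi_conj, xi_abs, mul_one]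
    exact le_trans hzl hl
  have hsq : w.re^2 + w.im^2 ≤ 4/3 := by
    have h1 : ‖w‖ ^ 2 ≤ (2 / Real.sqrt 3)^2 :=
      pow_le_pow_left₀ (norm_nonneg w) habs 2
    rw [r_sq, Complex.sq_norm, Complex.normSq_apply] at h1
    nlinarith
  rw [hrot1, Complex.mul_re, xi_re, xi_im] at hk
  have hvne : j.val ≠ k.val := by simpa [Fin.ext_iff] using hjk
  have hjb : j.val < 6 := j.isLt
  have hkb : k.val < 6 := k.isLt
  have hm1 : 1 ≤ m6 := by rw [hm6]; omega
  have hm5 : m6 ≤ 5 := by rw [hm6]; omega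
  clear_value m6
  have hs3 := sqrt3_sq
  have hs3p := sqrt3_pos
  interval_cases m6
  · rw [show (((1:ℤ)):ℝ) * (Real.pi/3) = Real.pi/3 by norm_num] at hk
    rw [Real.cos_pi_div_three, Real.sin_pi_div_three] at hk
    nlinarith [sq_nonneg (Real.sqrt 3 * w.im + 1), sq_nonneg (w.re - 1)]
  · rw [show (((2:ℤ)):ℝ) * (Real.pi/3) = 2 * (Real.pi/3) by push_cast; ring] at hk
    rw [cos23, sin23] at hk
    nlinarith [sq_nonneg (Real.sqrt 3 * w.im + 3)]
  · rw [show (((3:ℤ)):ℝ) * (Real.pi/3) = 3 * (Real.pi/3) by push_cast; ring] at hk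
    rw [cos33, sin33] at hk
    nlinarith
  · rw [show (((4:ℤ)):ℝ) * (Real.pi/3) = 4 * (Real.pi/3) by push_cast; ring] at hk
    rw [cos43, sin43] at hk
    nlinarith [sq_nonneg (Real.sqrt 3 * w.im - 3)]
  · rw [show (((5:ℤ)):ℝ) * (Real.pi/3) = 5 * (Real.pi/3) by push_cast; ring] at hk
    rw [cos53, sin53] at hk
    nlinarith [sq_nonneg (Real.sqrt 3 * w.im - 1), sq_nonneg (w.re - 1)]


lemma abs_le_iff_sq {l : ℝ} (hl : 0 ≤ l) (z : ℂ) :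
    ‖z‖ ≤ l ↔ z.re^2 + z.im^2 ≤ l^2 := by
  rw [Complex.norm_def, Complex.normSq_apply]
  constructor
  · intro h
    have hs := Real.sq_sqrt (by nlinarith [sq_nonneg z.re, sq_nonneg z.im] : (0:ℝ) ≤ z.re*z.re + z.im*z.im)
    nlinarith [Real.sqrt_nonneg (z.re*z.re+z.im*z.im)]
  · intro h
    have h2 : Real.sqrt (z.re*z.re + z.im*z.im) ≤ Real.sqrt (l^2) :=
      Real.sqrt_le_sqrt (by nlinarith)
    rwa [Real.sqrt_sq hl] at h2

lemma volume_segC_one (l : ℝ) (hl : 1 < l) :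
    volume (segC l 1) = ENNReal.ofReal (l^2 * Real.arccos (1/l) - Real.sqrt (l^2 - 1)) := by
  have hmp := Complex.volume_preserving_equiv_real_prod
  have hms : MeasurableSet {p : ℝ × ℝ | p.1^2 + p.2^2 ≤ l^2 ∧ 1 < p.1} := by
    apply MeasurableSet.inter
    · exact measurableSet_le ((measurable_fst.pow_const 2).add (measurable_snd.pow_const 2))
        measurable_const
    · exact measurableSet_lt measurable_const measurable_fst
  have hpre : Complex.measurableEquivRealProd ⁻¹' {p : ℝ × ℝ | p.1^2 + p.2^2 ≤ l^2 ∧ 1 < p.1}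
      = segC l 1 := by
    ext z
    have : Complex.measurableEquivRealProd z = (z.re, z.im) := rfl
    simp only [Set.mem_preimage, this, Set.mem_setOf_eq, segC, map_one, mul_one]
    rw [abs_le_iff_sq (by linarith : (0:ℝ) ≤ l)]
  rw [← hpre, hmp.measure_preimage hms.nullMeasurableSet, volume_segProd l hl]

noncomputable def rotC (m : ℤ) : ℂ ≃ₗᵢ[ℝ] ℂ :=
  rotation (Circle.exp (Real.pi/6 + m * (Real.pi/3)))

lemma volume_segC (l : ℝ) (hl : 1 < l) (m : ℤ) :
    volume (segC l (Nc m)) = ENNReal.ofReal (l^2 * Real.arccos (1/l) - Real.sqrt (l^2 - 1)) := by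
  rw [← volume_segC_one l hl]
  have hcoe : (((Circle.exp (Real.pi/6 + m * (Real.pi/3)))⁻¹ : Circle) : ℂ) = conj (Nc m) := by
    rw [Circle.coe_inv_eq_conj, Circle.coe_exp]; rfl
  have hrotpre : (rotC m).symm ⁻¹' (segC l 1) = segC l (Nc m) := by
    ext z
    simp only [Set.mem_preimage, segC, Set.mem_setOf_eq, map_one, mul_one, rotC,
      rotation_symm, rotation_apply, hcoe]
    rw [norm_mul, Complex.norm_conj, Nc, xi_abs, one_mul, mul_comm]
  rw [← hrotpre,
    ((rotC m).symm.measurePreserving).measure_preimage (segC_measurable l 1).nullMeasurableSet]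


lemma Nc_red (m : ℤ) : Nc m = Nc (m % 6) := by
  rw [Nc, Nc]
  conv_lhs => rw [show m = m % 6 + 6 * (m / 6) by omega]
  rw [show Real.pi/6 + ((m % 6 + 6 * (m / 6) : ℤ) : ℝ) * (Real.pi/3)
      = (Real.pi/6 + ((m % 6 : ℤ) : ℝ) * (Real.pi/3)) + ((m / 6 : ℤ) : ℝ) * (2 * Real.pi) by
    push_cast; ring]
  exact_mod_cast xi_period _ _

lemma disk_diff_eq (l : ℝ) :
    {z : ℂ | ‖z‖ ≤ l} \ HexC = ⋃ k : Fin 6, segC l (Nc (k:ℤ)) := by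
  ext z
  simp only [Set.mem_diff, Set.mem_setOf_eq, Set.mem_iUnion]
  constructor
  · rintro ⟨hzl, hz⟩
    by_contra hco
    push_neg at hco
    apply hz
    apply mem_hexC
    have key : ∀ k : Fin 6, (z * conj (Nc (k:ℤ))).re ≤ 1 := by
      intro k
      by_contra hgt
      exact hco k ⟨hzl, lt_of_not_ge hgt⟩
    intro m
    rw [Nc_red]
    have h0 : 0 ≤ m % 6 := Int.emod_nonneg m (by norm_num)
    have h6 : m % 6 < 6 := Int.emod_lt_of_pos m (by norm_num)
    interval_cases h : m % 6
    · exact key 0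
    · exact key 1
    · exact key 2
    · exact key 3
    · exact key 4
    · exact key 5
  · rintro ⟨k, hzk⟩
    refine ⟨hzk.1, fun hmem => ?_⟩
    exact absurd (hexC_subset_halfplane (k:ℤ) hmem) (not_le.2 hzk.2)

lemma volume_disk_diff (l : ℝ) (hl : 1 < l) (hl2 : l ≤ 2/Real.sqrt 3) :
    volume ({z : ℂ | ‖z‖ ≤ l} \ HexC)
      = 6 * ENNReal.ofReal (l^2 * Real.arccos (1/l) - Real.sqrt (l^2-1)) := by
  rw [disk_diff_eq l,
    measure_iUnion (seg_disjoint l hl2) (fun k => segC_measurable l _)]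
  simp only [volume_segC l hl, tsum_fintype]
  rw [Finset.sum_const, Finset.card_univ]
  simp [nsmul_eq_mul]


noncomputable def eC : EuclideanSpace ℝ (Fin 2) ≃ᵐ ℂ :=
  (((MeasurableEquiv.toLp 2 (Fin 2 → ℝ)).symm).trans
    (MeasurableEquiv.finTwoArrow)).trans Complex.measurableEquivRealProd.symm

lemma eC_apply (p : EuclideanSpace ℝ (Fin 2)) : eC p = Complex.equivRealProd.symm (p 0, p 1) :=
  rfl

lemma eC_re (p : EuclideanSpace ℝ (Fin 2)) : (eC p).re = p 0 := by
  rw [eC_apply, Complex.equivRealProd_symm_apply]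
  simp

lemma eC_im (p : EuclideanSpace ℝ (Fin 2)) : (eC p).im = p 1 := by
  rw [eC_apply, Complex.equivRealProd_symm_apply]
  simp

lemma eC_measurePreserving : MeasurePreserving eC volume volume := by
  have h1 := EuclideanSpace.volume_preserving_symm_measurableEquiv_toLp (Fin 2)
  have h2 := volume_preserving_finTwoArrow ℝ
  have h3 := Complex.volume_preserving_equiv_real_prod.symm
  exact h3.comp (h2.comp h1)

lemma eC_linear : IsLinearMap ℝ eC := by
  constructor
  · intro p q
    apply Complex.ext <;> simp [eC_re, eC_im]
  · intro c p
    apply Complex.ext <;> simp [eC_re, eC_im, Complex.real_smul]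

lemma eC_disk (l : ℝ) (hl : 0 ≤ l) :
    eC ⁻¹' {z : ℂ | ‖z‖ ≤ l} = closedBall (0 : EuclideanSpace ℝ (Fin 2)) l := by
  ext p
  rw [Set.mem_preimage, Set.mem_setOf_eq, mem_closedBall_zero_iff, abs_le_iff_sq hl,
    eC_re, eC_im, EuclideanSpace.norm_eq]
  rw [Fin.sum_univ_two]
  constructor
  · intro h
    rw [show l = Real.sqrt (l^2) by rw [Real.sqrt_sq hl]]
    apply Real.sqrt_le_sqrt
    simpa [sq_abs] using h
  · intro h
    have := Real.sq_sqrt (by positivity : (0:ℝ) ≤ ‖p 0‖^2 + ‖p 1‖^2)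
    have h2 : (Real.sqrt (‖p 0‖^2 + ‖p 1‖^2))^2 ≤ l^2 := by
      apply pow_le_pow_left₀ (Real.sqrt_nonneg _) h
    rw [this] at h2
    simpa [sq_abs] using h2

lemma eC_hex : eC ⁻¹' HexC = regularHexagon := by
  have hfun : ∀ k : Fin 6, eC ((WithLp.equiv 2 (Fin 2 → ℝ)).symm
      ![2 / Real.sqrt 3 * Real.cos ((k : ℝ) * (Real.pi / 3)),
        2 / Real.sqrt 3 * Real.sin ((k : ℝ) * (Real.pi / 3))]) = Vc (k : ℤ) := by
    intro k
    apply Complex.ext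
    · rw [eC_re, Vc]
      have h0 : ((WithLp.equiv 2 (Fin 2 → ℝ)).symm
          ![2 / Real.sqrt 3 * Real.cos ((k : ℝ) * (Real.pi / 3)),
            2 / Real.sqrt 3 * Real.sin ((k : ℝ) * (Real.pi / 3))]) 0
          = 2 / Real.sqrt 3 * Real.cos ((k : ℝ) * (Real.pi / 3)) := rfl
      rw [h0, show (((k:ℤ)):ℝ) = (k:ℝ) by push_cast; ring]
      simp [Complex.mul_re, xi_re, xi_im]
    · rw [eC_im, Vc]
      have h1 : ((WithLp.equiv 2 (Fin 2 → ℝ)).symm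
          ![2 / Real.sqrt 3 * Real.cos ((k : ℝ) * (Real.pi / 3)),
            2 / Real.sqrt 3 * Real.sin ((k : ℝ) * (Real.pi / 3))]) 1
          = 2 / Real.sqrt 3 * Real.sin ((k : ℝ) * (Real.pi / 3)) := rfl
      rw [h1, show (((k:ℤ)):ℝ) = (k:ℝ) by push_cast; ring]
      simp [Complex.mul_im, xi_re, xi_im]
  have himg : eC '' regularHexagon = HexC := by
    rw [regularHexagon, eC_linear.image_convexHull, ← Set.range_comp, HexC]
    exact congrArg (convexHull ℝ) (congrArg Set.range (funext hfun))
  rw [← himg, Set.preimage_image_eq _ eC.injective]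

lemma volume_euclid_diff (l : ℝ) (hl : 1 < l) (hl2 : l ≤ 2/Real.sqrt 3) :
    volume (closedBall (0 : EuclideanSpace ℝ (Fin 2)) l \ regularHexagon)
      = 6 * ENNReal.ofReal (l^2 * Real.arccos (1/l) - Real.sqrt (l^2-1)) := by
  have hmeas : NullMeasurableSet ({z : ℂ | ‖z‖ ≤ l} \ HexC) := by
    apply MeasurableSet.nullMeasurableSet
    apply MeasurableSet.diff
    · exact (isClosed_le continuous_norm continuous_const).measurableSet
    · exact ((Set.finite_range _).isCompact_convexHull ℝ |>.isClosed).measurableSet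
  rw [← eC_disk l (by linarith), ← eC_hex, ← Set.preimage_diff,
    eC_measurePreserving.measure_preimage hmeas, volume_disk_diff l hl hl2]



lemma part1 (x ll : ℝ) (hx : 1 ≤ x) (hxl : x ≤ ll) (hl : ll ≤ 2 / Real.sqrt 3) :
    0 ≤ -(ll ^ 2 / 2) * Real.arccos (x / ll) + x / 2 * Real.sqrt (ll ^ 2 - x ^ 2) +
      (3 / 2 - x) * (ll ^ 2 * Real.arccos (1 / ll) - Real.sqrt (ll ^ 2 - 1)) := by
  have hll1 : (1:ℝ) ≤ ll := le_trans hx hxl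
  have hl0 : (0:ℝ) < ll := by linarith
  have hC : 0 ≤ ll ^ 2 * Real.arccos (1 / ll) - Real.sqrt (ll ^ 2 - 1) := hexC_nonneg ll hll1
  have hll32 : ll < 3/2 := lt_of_le_of_lt hl r_lt_threehalf
  rcases eq_or_lt_of_le hxl with rfl | hxll
  · -- x = ll
    rw [div_self hl0.ne', Real.arccos_one, sub_self, Real.sqrt_zero]
    have : (0:ℝ) ≤ (3/2 - x) := by linarith
    nlinarith
  -- now x < ll, so 1 < ll
  have h1ll : 1 < ll := lt_of_le_of_lt hx hxll
  set C : ℝ := ll ^ 2 * Real.arccos (1 / ll) - Real.sqrt (ll ^ 2 - 1) with hCdef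
  set f : ℝ → ℝ := fun t => -(ll ^ 2 / 2) * Real.arccos (t / ll) +
      t / 2 * Real.sqrt (ll ^ 2 - t ^ 2) + (3 / 2 - t) * C with hf
  have hderiv : ∀ t ∈ Set.Ioo (1:ℝ) ll, HasDerivAt f (Real.sqrt (ll^2 - t^2) - C) t := by
    intro t ht
    obtain ⟨ht1, ht2⟩ := ht
    have ht0 : 0 < t := by linarith
    have htsq : t^2 < ll^2 := by nlinarith
    have hs : 0 < Real.sqrt (ll^2 - t^2) := Real.sqrt_pos.2 (by nlinarith)
    have hne1 : t / ll ≠ -1 := by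
      have : 0 < t/ll := div_pos ht0 hl0
      linarith
    have hne2 : t / ll ≠ 1 := by
      have : t/ll < 1 := (div_lt_one hl0).2 ht2
      linarith
    have harc : HasDerivAt (fun t : ℝ => Real.arccos (t/ll))
        (-(1 / Real.sqrt (1 - (t/ll)^2)) * (1/ll)) t :=
      by have := (Real.hasDerivAt_arccos hne1 hne2).comp t ((hasDerivAt_id' t).div_const ll); exact this
    have hsqrt := hasDerivAt_sqrt_sub ll t htsq
    have hprod : HasDerivAt (fun t : ℝ => t / 2 * Real.sqrt (ll^2 - t^2))
        (1/2 * Real.sqrt (ll^2 - t^2) + t/2 * (-t / Real.sqrt (ll^2 - t^2))) t := by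
      have : HasDerivAt (fun t : ℝ => t / 2 * Real.sqrt (ll^2 - t^2)) _ t :=
        ((hasDerivAt_id' t).div_const 2).mul hsqrt
      simpa using this
    have hlin : HasDerivAt (fun t : ℝ => (3/2 - t) * C) (-1 * C) t := by
      have := ((hasDerivAt_id t).const_sub (3/2)).mul_const C
      simpa using this
    have htotal := (harc.const_mul (-(ll^2/2))).add hprod |>.add hlin
    have heq : -(ll ^ 2 / 2) * (-(1 / Real.sqrt (1 - (t/ll)^2)) * (1/ll))
        + (1/2 * Real.sqrt (ll^2 - t^2) + t/2 * (-t / Real.sqrt (ll^2 - t^2))) + (-1 * C)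
        = Real.sqrt (ll^2 - t^2) - C := by
      rw [sqrt_one_sub_div ll t hl0]
      have hsq := Real.sq_sqrt (by nlinarith : (0:ℝ) ≤ ll^2 - t^2)
      field_simp
      linear_combination (-1) * hsq
    rw [heq] at htotal
    exact htotal
  have hconc : ConcaveOn ℝ (Set.Icc 1 ll) f := by
    apply AntitoneOn.concaveOn_of_deriv (convex_Icc 1 ll)
    · -- continuity
      apply ContinuousOn.add
      apply ContinuousOn.add
      · exact (continuous_const.mul
          (Real.continuous_arccos.comp (continuous_id.div_const ll))).continuousOn
      · exact ((continuous_id.div_const 2).mul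
          (Real.continuous_sqrt.comp (by continuity))).continuousOn
      · exact ((continuous_const.sub continuous_id).mul continuous_const).continuousOn
    · intro t ht
      rw [interior_Icc] at ht
      exact ((hderiv t ht).differentiableAt).differentiableWithinAt
    · intro a ha b hb hab
      rw [interior_Icc] at ha hb
      rw [(hderiv a ha).deriv, (hderiv b hb).deriv]
      have : Real.sqrt (ll^2 - b^2) ≤ Real.sqrt (ll^2 - a^2) := by
        apply Real.sqrt_le_sqrt
        nlinarith [ha.1, hb.1]
      linarith
  -- apply concavity
  set a : ℝ := (ll - x)/(ll - 1) with hadef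
  set b : ℝ := (x - 1)/(ll - 1) with hbdef
  have hden : 0 < ll - 1 := by linarith
  have ha0 : 0 ≤ a := div_nonneg (by linarith) hden.le
  have hb0 : 0 ≤ b := div_nonneg (by linarith) hden.le
  have hab : a + b = 1 := by rw [hadef, hbdef]; field_simp; ring
  have hkey := hconc.2 (Set.mem_Icc.2 ⟨le_refl 1, hll1⟩)
    (Set.mem_Icc.2 ⟨hll1, le_refl ll⟩) ha0 hb0 hab
  have hcomb : a • (1:ℝ) + b • ll = x := by
    rw [hadef, hbdef, smul_eq_mul, smul_eq_mul]
    field_simp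
    ring
  rw [hcomb] at hkey
  have hf1 : f 1 = 0 := by
    show -(ll ^ 2 / 2) * Real.arccos (1 / ll) + 1 / 2 * Real.sqrt (ll ^ 2 - 1 ^ 2)
        + (3 / 2 - 1) * C = 0
    rw [one_pow, hCdef]
    ring
  have hfll : f ll = (3/2 - ll) * C := by
    show -(ll ^ 2 / 2) * Real.arccos (ll / ll) + ll / 2 * Real.sqrt (ll ^ 2 - ll ^ 2)
        + (3 / 2 - ll) * C = _
    rw [div_self hl0.ne', Real.arccos_one, sub_self, Real.sqrt_zero]
    ring
  rw [hf1, hfll, smul_eq_mul, smul_eq_mul, mul_zero, zero_add] at hkey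
  have hfx : 0 ≤ f x := by
    have : 0 ≤ b * ((3/2 - ll) * C) := by
      apply mul_nonneg hb0
      apply mul_nonneg (by linarith) hC
    exact le_trans this hkey
  exact hfx

end Aux

/-- Boundary-cell inequality: for `1 ≤ x ≤ ℓ ≤ 2/√3`,
`-(ℓ²/2)·arccos(x/ℓ) + (x/2)·√(ℓ² - x²) + (3/2 - x)·(ℓ²·arccos(1/ℓ) - √(ℓ² - 1)) ≥ 0`;
moreover, for `1 < ℓ ≤ 2/√3`, the quantity `ℓ²·arccos(1/ℓ) - √(ℓ² - 1)` is positive and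
equals one sixth of the area of `ℓB² ∖ H`, `H` being the regular hexagon of inradius `1`
centered at the origin. -/
theorem boundary_cell_inequality :
    (∀ x ll : ℝ, 1 ≤ x → x ≤ ll → ll ≤ 2 / Real.sqrt 3 →
      0 ≤ -(ll ^ 2 / 2) * Real.arccos (x / ll) + x / 2 * Real.sqrt (ll ^ 2 - x ^ 2) +
        (3 / 2 - x) * (ll ^ 2 * Real.arccos (1 / ll) - Real.sqrt (ll ^ 2 - 1))) ∧
    (∀ ll : ℝ, 1 < ll → ll ≤ 2 / Real.sqrt 3 →
      0 < ll ^ 2 * Real.arccos (1 / ll) - Real.sqrt (ll ^ 2 - 1) ∧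
      ll ^ 2 * Real.arccos (1 / ll) - Real.sqrt (ll ^ 2 - 1) =
        (volume (closedBall (0 : EuclideanSpace ℝ (Fin 2)) ll \ regularHexagon)).toReal / 6) := by
  constructor
  · exact fun x ll hx hxl hl => part1 x ll hx hxl hl
  · intro ll hl1 hl2
    refine ⟨hexC_pos ll hl1, ?_⟩
    rw [volume_euclid_diff ll hl1 hl2, ENNReal.toReal_mul,
      ENNReal.toReal_ofReal (hexC_nonneg ll hl1.le)]
    norm_num
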